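/- arXiv:2306.14428 — 2 statements merged into one kernel-verified Lean document; each statement's English description precedes it below -/
import Mathlib

section
/- Let p ≥ 2 and b = p + 3. For a = (a1,…,a_{2p}) ∈ ℂ^{2p}, let M(a) be the b × (2b−6) block matrix [[x(a), W(a)],[U(a), 0]] with blocking (b−2, 2) rows × (b−2, b−4) columns, where x(a) = a1·Id_{b−2}; W(a) has first row (−a3, −a5, …, −a_{2p−1}), second row (−a4, −a6, …, −a_{2p}), and its remaining (b−4)×(b−4) block equals a2·Id_{b−4}; and U(a) = [[−a2, 0, −a3, −a5, …, −a_{2p−1}],[0, −a2, −a4, −a6, …, −a_{2p}]]. Then every M(a) has rank at most b−2, i.e., {M(a) : a ∈ ℂ^{2p}} is a 2(b−3)-dimensional space of b×(2b−6) matrices of bounded rank b−2. -/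
open Matrix

/-- The generalized Case (III) family (\S7 of the paper): for `b = p+3` and
`a ∈ ℂ^{2p}`, the `b × (2b−6)` block matrix `[[x(a), W(a)], [U(a), 0]]` with
`x(a) = a1·Id_{b−2}`, `W(a)` having rows `(−a3, −a5, …, −a_{2p−1})`,
`(−a4, −a6, …, −a_{2p})` followed by `a2·Id_{b−4}`, and
`U(a) = [[−a2, 0, −a3, −a5, …, −a_{2p−1}], [0, −a2, −a4, −a6, …, −a_{2p}]]`.
(Here `a1 = a 0`, `a2 = a 1`, …, `a_{2p} = a (2p−1)`.) -/
noncomputable def Mgen (p : ℕ) (hp : 2 ≤ p) (a : Fin (2 * p) → ℂ) :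
    Matrix (Fin (p + 1) ⊕ Fin 2) (Fin (p + 1) ⊕ Fin (p - 1)) ℂ :=
  Matrix.fromBlocks
    (a ⟨0, by omega⟩ • (1 : Matrix (Fin (p + 1)) (Fin (p + 1)) ℂ))
    (Matrix.of fun (i : Fin (p + 1)) (j : Fin (p - 1)) =>
      if (i : ℕ) = 0 then -(a ⟨2 * (j : ℕ) + 2, by have := j.isLt; omega⟩)
      else if (i : ℕ) = 1 then -(a ⟨2 * (j : ℕ) + 3, by have := j.isLt; omega⟩)
      else if (i : ℕ) = (j : ℕ) + 2 then a ⟨1, by omega⟩ else 0)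
    (Matrix.of fun (i : Fin 2) (j : Fin (p + 1)) =>
      if (j : ℕ) = 0 then (if (i : ℕ) = 0 then -(a ⟨1, by omega⟩) else 0)
      else if (j : ℕ) = 1 then (if (i : ℕ) = 1 then -(a ⟨1, by omega⟩) else 0)
      else -(a ⟨2 * (j : ℕ) - 2 + (i : ℕ), by have := j.isLt; have := i.isLt; omega⟩))
    0

namespace Stmt17Aux

/-- The `W` block of `Mgen`. -/
noncomputable def Wb (p : ℕ) (a : Fin (2 * p) → ℂ) : Matrix (Fin (p + 1)) (Fin (p - 1)) ℂ :=
  Matrix.of fun (i : Fin (p + 1)) (j : Fin (p - 1)) =>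
    if (i : ℕ) = 0 then -(a ⟨2 * (j : ℕ) + 2, by have := j.isLt; omega⟩)
    else if (i : ℕ) = 1 then -(a ⟨2 * (j : ℕ) + 3, by have := j.isLt; omega⟩)
    else if (i : ℕ) = (j : ℕ) + 2 then a ⟨1, by have := j.isLt; omega⟩ else 0

/-- The `U` block of `Mgen`. -/
noncomputable def Ub (p : ℕ) (hp : 2 ≤ p) (a : Fin (2 * p) → ℂ) : Matrix (Fin 2) (Fin (p + 1)) ℂ :=
  Matrix.of fun (i : Fin 2) (j : Fin (p + 1)) =>
    if (j : ℕ) = 0 then (if (i : ℕ) = 0 then -(a ⟨1, by omega⟩) else 0)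
    else if (j : ℕ) = 1 then (if (i : ℕ) = 1 then -(a ⟨1, by omega⟩) else 0)
    else -(a ⟨2 * (j : ℕ) - 2 + (i : ℕ), by have := j.isLt; have := i.isLt; omega⟩)

lemma Mgen_eq (p : ℕ) (hp : 2 ≤ p) (a : Fin (2 * p) → ℂ) :
    Mgen p hp a = Matrix.fromBlocks
      (a ⟨0, by omega⟩ • (1 : Matrix (Fin (p + 1)) (Fin (p + 1)) ℂ))
      (Wb p a) (Ub p hp a) 0 := rfl

lemma fromColumns_zero {m n₁ n₂ : Type*} :
    (Matrix.fromCols (0 : Matrix m n₁ ℂ) (0 : Matrix m n₂ ℂ)) = 0 := by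
  ext i (j | j) <;> rfl

lemma rank_fromBlocks_top_le {m₁ m₂ n₁ n₂ : Type*} [Fintype m₁] [Fintype m₂]
    [Fintype n₁] [Fintype n₂] [DecidableEq m₁]
    (A : Matrix m₁ n₁ ℂ) (B : Matrix m₁ n₂ ℂ) :
    (Matrix.fromBlocks A B (0 : Matrix m₂ n₁ ℂ) 0).rank ≤ Fintype.card m₁ := by
  have h : Matrix.fromBlocks A B (0 : Matrix m₂ n₁ ℂ) 0
      = Matrix.fromRows (1 : Matrix m₁ m₁ ℂ) (0 : Matrix m₂ m₁ ℂ) * Matrix.fromCols A B := by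
    rw [Matrix.fromRows_mul, Matrix.one_mul, Matrix.zero_mul,
      ← fromColumns_zero (m := m₂) (n₁ := n₁) (n₂ := n₂),
      Matrix.fromRows_fromCols_eq_fromBlocks]
  rw [h]
  exact (Matrix.rank_mul_le_right _ _).trans (Matrix.rank_le_card_height _)

lemma rank_fromBlocks_tr_le {m₁ m₂ n₁ n₂ : Type*} [Fintype m₁] [Fintype m₂]
    [Fintype n₁] [Fintype n₂] [DecidableEq n₂] [DecidableEq m₁]
    (B : Matrix m₁ n₂ ℂ) :
    (Matrix.fromBlocks (0 : Matrix m₁ n₁ ℂ) B (0 : Matrix m₂ n₁ ℂ) 0).rank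
      ≤ Fintype.card n₂ := by
  have h : Matrix.fromBlocks (0 : Matrix m₁ n₁ ℂ) B (0 : Matrix m₂ n₁ ℂ) 0
      = Matrix.fromRows (1 : Matrix m₁ m₁ ℂ) (0 : Matrix m₂ m₁ ℂ)
        * (B * Matrix.fromCols (0 : Matrix n₂ n₁ ℂ) (1 : Matrix n₂ n₂ ℂ)) := by
    rw [Matrix.mul_fromCols, Matrix.mul_zero, Matrix.mul_one, Matrix.fromRows_mul,
      Matrix.one_mul, Matrix.zero_mul,
      ← fromColumns_zero (m := m₂) (n₁ := n₁) (n₂ := n₂),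
      Matrix.fromRows_fromCols_eq_fromBlocks]
  rw [h]
  exact (Matrix.rank_mul_le_right _ _).trans
    ((Matrix.rank_mul_le_left _ _).trans (Matrix.rank_le_card_width _))

lemma rank_fromBlocks_bl_le {m₁ m₂ n₁ n₂ : Type*} [Fintype m₁] [Fintype m₂]
    [Fintype n₁] [Fintype n₂] [DecidableEq m₂] [DecidableEq m₁]
    (C : Matrix m₂ n₁ ℂ) :
    (Matrix.fromBlocks (0 : Matrix m₁ n₁ ℂ) (0 : Matrix m₁ n₂ ℂ) C 0).rank
      ≤ Fintype.card m₂ := by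
  have h : Matrix.fromBlocks (0 : Matrix m₁ n₁ ℂ) (0 : Matrix m₁ n₂ ℂ) C 0
      = Matrix.fromRows (0 : Matrix m₁ m₂ ℂ) (1 : Matrix m₂ m₂ ℂ)
        * Matrix.fromCols C (0 : Matrix m₂ n₂ ℂ) := by
    rw [Matrix.fromRows_mul, Matrix.one_mul, Matrix.zero_mul,
      ← fromColumns_zero (m := m₁) (n₁ := n₁) (n₂ := n₂),
      Matrix.fromRows_fromCols_eq_fromBlocks]
  rw [h]
  exact (Matrix.rank_mul_le_right _ _).trans (Matrix.rank_le_card_height _)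

lemma rank_add_le {m n : Type*} [Fintype m] [Fintype n] (A B : Matrix m n ℂ) :
    (A + B).rank ≤ A.rank + B.rank := by
  rw [Matrix.rank, Matrix.rank, Matrix.rank]
  refine le_trans (Submodule.finrank_mono ?_)
    (Submodule.finrank_add_le_finrank_add_finrank _ _)
  rintro x ⟨v, rfl⟩
  rw [Matrix.mulVecLin_apply, Matrix.add_mulVec]
  exact Submodule.add_mem_sup ⟨v, rfl⟩ ⟨v, rfl⟩

lemma UW_zero (p : ℕ) (hp : 2 ≤ p) (a : Fin (2 * p) → ℂ) :
    Ub p hp a * Wb p a = 0 := by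
  ext i j
  rw [Matrix.mul_apply]
  have hj2 : (j : ℕ) + 2 < p + 1 := by have := j.isLt; omega
  have key : ∀ k : Fin (p + 1), Ub p hp a i k * Wb p a k j =
      (if k = (⟨0, by omega⟩ : Fin (p + 1)) then
        (if (i : ℕ) = 0 then -(a ⟨1, by omega⟩) else 0) * -(a ⟨2 * (j : ℕ) + 2, by have := j.isLt; omega⟩) else 0)
      + (if k = (⟨1, by omega⟩ : Fin (p + 1)) then
        (if (i : ℕ) = 1 then -(a ⟨1, by omega⟩) else 0) * -(a ⟨2 * (j : ℕ) + 3, by have := j.isLt; omega⟩) else 0)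
      + (if k = (⟨(j : ℕ) + 2, hj2⟩ : Fin (p + 1)) then
        -(a ⟨2 * (j : ℕ) + 2 + (i : ℕ), by have := j.isLt; have := i.isLt; omega⟩) * a ⟨1, by omega⟩ else 0) := by
    intro k
    rcases k with ⟨k, hk⟩
    simp only [Ub, Wb, Matrix.of_apply, Fin.mk.injEq]
    by_cases h0 : k = 0
    · subst h0; simp
    · by_cases h1 : k = 1
      · subst h1; simp
      · by_cases h2 : k = (j : ℕ) + 2
        · subst h2
          have : 2 * ((j : ℕ) + 2) - 2 + (i : ℕ) = 2 * (j : ℕ) + 2 + (i : ℕ) := by omega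
          simp [h0, h1, this]
        · simp [h0, h1, h2, Ne.symm h0, Ne.symm h1]
  rw [Finset.sum_congr rfl (fun k _ => key k)]
  rw [Finset.sum_add_distrib, Finset.sum_add_distrib,
    Finset.sum_ite_eq' Finset.univ, Finset.sum_ite_eq' Finset.univ,
    Finset.sum_ite_eq' Finset.univ]
  simp only [Finset.mem_univ, if_true, Matrix.zero_apply]
  rcases i with ⟨i, hi⟩
  interval_cases i
  · simp only [Fin.val_mk]
    norm_num
    ring
  · simp only [Fin.val_mk]
    norm_num
    ring

/-- `Mgen` as a linear map. -/
noncomputable def MgenL (p : ℕ) (hp : 2 ≤ p) :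
    (Fin (2 * p) → ℂ) →ₗ[ℂ] Matrix (Fin (p + 1) ⊕ Fin 2) (Fin (p + 1) ⊕ Fin (p - 1)) ℂ where
  toFun := Mgen p hp
  map_add' a b := by
    ext (i | i) (j | j) <;>
      simp only [Mgen, Matrix.fromBlocks_apply₁₁, Matrix.fromBlocks_apply₁₂,
        Matrix.fromBlocks_apply₂₁, Matrix.fromBlocks_apply₂₂, Matrix.of_apply,
        Matrix.smul_apply, Matrix.one_apply, Pi.add_apply, Matrix.add_apply,
        smul_eq_mul, Matrix.zero_apply] <;>
      (try split_ifs) <;> ring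
  map_smul' c a := by
    ext (i | i) (j | j) <;>
      simp only [Mgen, Matrix.fromBlocks_apply₁₁, Matrix.fromBlocks_apply₁₂,
        Matrix.fromBlocks_apply₂₁, Matrix.fromBlocks_apply₂₂, Matrix.of_apply,
        Matrix.smul_apply, Matrix.one_apply, Pi.smul_apply, RingHom.id_apply,
        smul_eq_mul, Matrix.zero_apply] <;>
      (try split_ifs) <;> ring

lemma MgenL_injective (p : ℕ) (hp : 2 ≤ p) : Function.Injective (MgenL p hp) := by
  intro x y hxy
  have hab : Mgen p hp x = Mgen p hp y := hxy
  funext k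
  have h00 : x ⟨0, by omega⟩ = y ⟨0, by omega⟩ := by
    have := congrFun (congrFun hab (Sum.inl ⟨0, by omega⟩)) (Sum.inl ⟨0, by omega⟩)
    simpa [Mgen, Matrix.one_apply] using this
  have h11 : x ⟨1, by omega⟩ = y ⟨1, by omega⟩ := by
    have := congrFun (congrFun hab (Sum.inl ⟨2, by omega⟩)) (Sum.inr ⟨0, by omega⟩)
    simpa [Mgen] using this
  have hW0 : ∀ j : ℕ, ∀ hj : j < p - 1,
      x ⟨2 * j + 2, by omega⟩ = y ⟨2 * j + 2, by omega⟩ := by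
    intro j hj
    have := congrFun (congrFun hab (Sum.inl ⟨0, by omega⟩)) (Sum.inr ⟨j, hj⟩)
    simpa [Mgen] using this
  have hW1 : ∀ j : ℕ, ∀ hj : j < p - 1,
      x ⟨2 * j + 3, by omega⟩ = y ⟨2 * j + 3, by omega⟩ := by
    intro j hj
    have := congrFun (congrFun hab (Sum.inl ⟨1, by omega⟩)) (Sum.inr ⟨j, hj⟩)
    simpa [Mgen] using this
  rcases k with ⟨k, hk⟩
  by_cases hk0 : k = 0
  · subst hk0; exact h00
  by_cases hk1 : k = 1
  · subst hk1; exact h11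
  by_cases hke : k % 2 = 0
  · have hj : (k - 2) / 2 < p - 1 := by omega
    have hkek : 2 * ((k - 2) / 2) + 2 = k := by omega
    have := hW0 ((k - 2) / 2) hj
    have hfin : (⟨2 * ((k - 2) / 2) + 2, by omega⟩ : Fin (2 * p)) = ⟨k, hk⟩ :=
      Fin.ext hkek
    rwa [hfin] at this
  · have hj : (k - 3) / 2 < p - 1 := by omega
    have hkek : 2 * ((k - 3) / 2) + 3 = k := by omega
    have := hW1 ((k - 3) / 2) hj
    have hfin : (⟨2 * ((k - 3) / 2) + 3, by omega⟩ : Fin (2 * p)) = ⟨k, hk⟩ :=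
      Fin.ext hkek
    rwa [hfin] at this

end Stmt17Aux

open Stmt17Aux in
/-- Every member of the generalized family has rank at most `b − 2 = p + 1`, and
the family `{M(a) : a ∈ ℂ^{2p}}` spans a `2p = 2(b−3)`-dimensional space of
`b × (2b−6)` matrices: it is a `2(b−3)`-dimensional space of bounded rank `b−2`. -/
theorem stmt17 (p : ℕ) (hp : 2 ≤ p) :
    (∀ a : Fin (2 * p) → ℂ, (Mgen p hp a).rank ≤ p + 1) ∧
    Module.finrank ℂ (Submodule.span ℂ (Set.range (Mgen p hp))) = 2 * p := by
  constructor
  · intro a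
    by_cases ha : a ⟨0, by omega⟩ = 0
    · rw [Mgen_eq, ha, zero_smul]
      have hsplit : Matrix.fromBlocks (0 : Matrix (Fin (p+1)) (Fin (p+1)) ℂ)
          (Wb p a) (Ub p hp a) 0
          = Matrix.fromBlocks 0 (Wb p a) 0 0 + Matrix.fromBlocks 0 0 (Ub p hp a) 0 := by
        rw [Matrix.fromBlocks_add]
        simp
      rw [hsplit]
      refine le_trans (rank_add_le _ _) ?_
      have h1 := rank_fromBlocks_tr_le (m₁ := Fin (p+1)) (m₂ := Fin 2)
        (n₁ := Fin (p+1)) (Wb p a)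
      have h2 := rank_fromBlocks_bl_le (m₁ := Fin (p+1)) (n₂ := Fin (p-1)) (Ub p hp a)
      simp only [Fintype.card_fin] at h1 h2
      omega
    · set α := a ⟨0, by omega⟩ with hα
      set L : Matrix (Fin (p+1) ⊕ Fin 2) (Fin (p+1) ⊕ Fin 2) ℂ :=
        Matrix.fromBlocks 1 0 (-(α⁻¹ • Ub p hp a)) 1 with hL
      have hdet : IsUnit L.det := by
        rw [hL, Matrix.det_fromBlocks_zero₁₂, Matrix.det_one, Matrix.det_one, mul_one]
        exact isUnit_one
      have hLM : L * Mgen p hp a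
          = Matrix.fromBlocks (α • (1 : Matrix (Fin (p+1)) (Fin (p+1)) ℂ)) (Wb p a) 0 0 := by
        rw [Mgen_eq, hL, Matrix.fromBlocks_multiply]
        have hBL : -(α⁻¹ • Ub p hp a) * (a ⟨0, by omega⟩ • (1 : Matrix (Fin (p+1)) (Fin (p+1)) ℂ))
            = -(Ub p hp a) := by
          rw [Matrix.neg_mul, Matrix.smul_mul, Matrix.mul_smul, Matrix.mul_one, smul_smul,
            ← hα, inv_mul_cancel₀ ha, one_smul]
        have hBR : -(α⁻¹ • Ub p hp a) * Wb p a = 0 := by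
          rw [Matrix.neg_mul, Matrix.smul_mul, UW_zero p hp a, smul_zero, neg_zero]
        rw [hBL, hBR]
        simp only [Matrix.one_mul, Matrix.mul_zero, Matrix.zero_mul, add_zero, zero_add,
          neg_add_cancel, ← hα]
      have := rank_fromBlocks_top_le (m₂ := Fin 2) (α • (1 : Matrix (Fin (p+1)) (Fin (p+1)) ℂ))
        (Wb p a)
      rw [← hLM, Matrix.rank_mul_eq_right_of_isUnit_det L _ hdet] at this
      simpa using this
  · have hr : Set.range (Mgen p hp) = ↑(LinearMap.range (MgenL p hp)) := by
      rw [LinearMap.coe_range]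
      rfl
    rw [hr, Submodule.span_eq, LinearMap.finrank_range_of_inj (MgenL_injective p hp)]
    simp [Module.finrank_pi]
end

section
/- Let k ≥ 1. For all a1, a2 ∈ ℂ and every k×k complex matrix X, the 3k×3k block matrix [[a1·Id_k, 0, −X],[0, a1·Id_k, a2·Id_k],[a2·Id_k, X, 0]] has rank at most 2k. In particular, {this matrix : a1, a2 ∈ ℂ, X ∈ Matrix(k,k,ℂ)} is a (k²+2)-dimensional linear space of 3k×3k matrices of bounded rank 2k. -/
open Matrix

/-- The `3k × 3k` block matrix `[[a1·Id, 0, −X], [0, a1·Id, a2·Id], [a2·Id, X, 0]]`. -/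
noncomputable def blowupMat (k : ℕ) (a1 a2 : ℂ) (X : Matrix (Fin k) (Fin k) ℂ) :
    Matrix ((Fin k ⊕ Fin k) ⊕ Fin k) ((Fin k ⊕ Fin k) ⊕ Fin k) ℂ :=
  Matrix.fromBlocks
    (Matrix.fromBlocks (a1 • (1 : Matrix (Fin k) (Fin k) ℂ)) 0 0
      (a1 • (1 : Matrix (Fin k) (Fin k) ℂ)))
    (Matrix.fromRows (-X) (a2 • (1 : Matrix (Fin k) (Fin k) ℂ)))
    (Matrix.fromCols (a2 • (1 : Matrix (Fin k) (Fin k) ℂ)) X)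
    0

/-- Every `blowupMat` factors through a `3k × 2k` matrix, hence has rank at most `2k`. -/
lemma blowup_rank_le (k : ℕ) (a1 a2 : ℂ) (X : Matrix (Fin k) (Fin k) ℂ) :
    (blowupMat k a1 a2 X).rank ≤ 2 * k := by
  have key : ∃ (B : Matrix ((Fin k ⊕ Fin k) ⊕ Fin k) (Fin k ⊕ Fin k) ℂ)
      (C : Matrix (Fin k ⊕ Fin k) ((Fin k ⊕ Fin k) ⊕ Fin k) ℂ),
      blowupMat k a1 a2 X = B * C := by
    by_cases h : a1 = 0
    · refine ⟨Matrix.fromRows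
        (Matrix.fromBlocks (-X) 0 (a2 • (1 : Matrix (Fin k) (Fin k) ℂ)) 0)
        (Matrix.fromCols 0 (1 : Matrix (Fin k) (Fin k) ℂ)),
        Matrix.fromCols
        (Matrix.fromBlocks 0 0 (a2 • (1 : Matrix (Fin k) (Fin k) ℂ)) X)
        (Matrix.fromRows (1 : Matrix (Fin k) (Fin k) ℂ) 0), ?_⟩
      rw [Matrix.fromRows_mul_fromCols, blowupMat, h, Matrix.fromBlocks_multiply,
        Matrix.fromBlocks_mul_fromRows, Matrix.fromCols_mul_fromBlocks,
        Matrix.fromCols_mul_fromRows]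
      simp
    · refine ⟨Matrix.fromRows
        (Matrix.fromBlocks (a1 • (1 : Matrix (Fin k) (Fin k) ℂ)) 0 0
          (a1 • (1 : Matrix (Fin k) (Fin k) ℂ)))
        (Matrix.fromCols (a2 • (1 : Matrix (Fin k) (Fin k) ℂ)) X),
        Matrix.fromCols (1 : Matrix (Fin k ⊕ Fin k) (Fin k ⊕ Fin k) ℂ)
        (Matrix.fromRows ((-a1⁻¹) • X)
          ((a1⁻¹ * a2) • (1 : Matrix (Fin k) (Fin k) ℂ))), ?_⟩
      rw [Matrix.fromRows_mul_fromCols, Matrix.fromBlocks_mul_fromRows,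
        Matrix.fromCols_mul_fromRows, Matrix.mul_one, Matrix.mul_one, blowupMat]
      simp [smul_mul_assoc, Matrix.mul_smul, smul_smul, mul_inv_cancel₀ h]
      rw [inv_mul_cancel₀ h, one_smul, mul_comm a1⁻¹ a2, mul_assoc,
        inv_mul_cancel₀ h, mul_one]
  obtain ⟨B, C, hBC⟩ := key
  rw [hBC]
  calc (B * C).rank ≤ B.rank := Matrix.rank_mul_le_left B C
    _ ≤ Fintype.card (Fin k ⊕ Fin k) := Matrix.rank_le_card_width B
    _ = 2 * k := by simp [two_mul]

/-- `blowupMat` as a linear map in `(a1, a2, X)`. -/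
noncomputable def blowupL (k : ℕ) :
    (ℂ × ℂ × Matrix (Fin k) (Fin k) ℂ) →ₗ[ℂ]
      Matrix ((Fin k ⊕ Fin k) ⊕ Fin k) ((Fin k ⊕ Fin k) ⊕ Fin k) ℂ where
  toFun p := blowupMat k p.1 p.2.1 p.2.2
  map_add' p q := by
    ext i j
    rcases i with (i | i) | i <;> rcases j with (j | j) | j <;>
      simp [blowupMat, Matrix.one_apply, add_mul] <;>
      first | (split <;> simp) | ring
  map_smul' c p := by
    ext i j
    rcases i with (i | i) | i <;> rcases j with (j | j) | j <;>
      simp [blowupMat, Matrix.one_apply, mul_assoc] <;>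
      first | (split <;> simp) | ring

lemma blowupL_apply (k : ℕ) (a1 a2 : ℂ) (X : Matrix (Fin k) (Fin k) ℂ) :
    blowupL k (a1, a2, X) = blowupMat k a1 a2 X := rfl

lemma blowupL_inj (k : ℕ) (hk : 1 ≤ k) : Function.Injective (blowupL k) := by
  rw [injective_iff_map_eq_zero]
  rintro ⟨a1, a2, X⟩ h
  have i0 : Fin k := ⟨0, hk⟩
  rw [blowupL_apply] at h
  have h1 := congrFun (congrFun h (Sum.inl (Sum.inl i0))) (Sum.inl (Sum.inl i0))
  have h2 := congrFun (congrFun h (Sum.inl (Sum.inr i0))) (Sum.inr i0)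
  have hX : X = 0 := by
    ext i j
    have := congrFun (congrFun h (Sum.inr i)) (Sum.inl (Sum.inr j))
    simpa [blowupMat] using this
  simp [blowupMat, Matrix.one_apply] at h1 h2
  simp [Prod.ext_iff, h1, h2, hX]

/-- For every `a1, a2 ∈ ℂ` and every `k×k` matrix `X`, the `3k×3k` block matrix
`[[a1·Id, 0, −X], [0, a1·Id, a2·Id], [a2·Id, X, 0]]` has rank at most `2k`; in
particular these matrices form a `(k²+2)`-dimensional linear space of `3k×3k`
matrices of bounded rank `2k`. -/
theorem stmt18 (k : ℕ) (hk : 1 ≤ k) :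
    (∀ (a1 a2 : ℂ) (X : Matrix (Fin k) (Fin k) ℂ), (blowupMat k a1 a2 X).rank ≤ 2 * k) ∧
    Module.finrank ℂ
      (Submodule.span ℂ {M | ∃ (a1 a2 : ℂ) (X : Matrix (Fin k) (Fin k) ℂ),
        M = blowupMat k a1 a2 X}) = k ^ 2 + 2 := by
  refine ⟨blowup_rank_le k, ?_⟩
  have hset : {M | ∃ (a1 a2 : ℂ) (X : Matrix (Fin k) (Fin k) ℂ),
      M = blowupMat k a1 a2 X} = Set.range (blowupL k) := by
    ext M
    constructor
    · rintro ⟨a1, a2, X, rfl⟩; exact ⟨(a1, a2, X), blowupL_apply k a1 a2 X⟩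
    · rintro ⟨⟨a1, a2, X⟩, rfl⟩; exact ⟨a1, a2, X, (blowupL_apply k a1 a2 X).symm⟩
  rw [hset, ← LinearMap.coe_range, Submodule.span_eq,
    LinearMap.finrank_range_of_inj (blowupL_inj k hk)]
  rw [Module.finrank_prod, Module.finrank_prod, Module.finrank_self,
    Module.finrank_matrix]
  simp [sq]
  ring
end
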